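/- Let y ∈ ℝ^d and α > 0, and set s := ‖y‖_2. Define f(x) := (1/2)(x − s)^2 + α·log(1+x) and, when (1+s)^2 > 4α, ξ := (s − 1)/2 + sqrt((1+s)^2/4 − α). Define w* := (ξ/‖y‖_2)·y if f(ξ) ≤ f(0), (1+s)^2 > 4α, and ξ > 0; and w* := 0 otherwise. Then w* is a global minimizer of w ↦ (1/2)‖y − w‖_2^2 + α·log(1 + ‖w‖_2) over w ∈ ℝ^d. -/

import Mathlib

private lemma hasDerivAt_f (s α : ℝ) {x : ℝ} (hx : -1 < x) :
    HasDerivAt (fun x => (1/2) * (x - s)^2 + α * Real.log (1 + x))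
      ((x - s) + α * (1 + x)⁻¹) x := by
  have h0 : HasDerivAt (fun x : ℝ => x - s) 1 x := (hasDerivAt_id x).sub_const s
  have h1 : HasDerivAt (fun x : ℝ => (1/2) * (x - s)^2) (x - s) x := by
    have := (h0.pow 2).const_mul (1/2 : ℝ)
    exact this.congr_deriv (by ring)
  have hne : 1 + x ≠ 0 := by linarith
  have h2 : HasDerivAt (fun x : ℝ => α * Real.log (1 + x)) (α * (1 + x)⁻¹) x := by
    have h3 : HasDerivAt (fun x : ℝ => 1 + x) 1 x := (hasDerivAt_id x).const_add 1
    have := ((Real.hasDerivAt_log hne).comp x h3).const_mul α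
    exact this.congr_deriv (by ring)
  exact h1.add h2

private lemma mono_f (s α a b : ℝ) (ha : 0 ≤ a)
    (hq : ∀ x ∈ Set.Ioo a b, 0 ≤ x^2 + (1-s)*x + (α - s)) :
    MonotoneOn (fun x => (1/2) * (x - s)^2 + α * Real.log (1 + x)) (Set.Icc a b) := by
  apply monotoneOn_of_deriv_nonneg (convex_Icc a b)
  · exact fun x hx => (hasDerivAt_f s α (by have := hx.1; linarith)).continuousAt.continuousWithinAt
  · intro x hx
    rw [interior_Icc] at hx
    exact (hasDerivAt_f s α (by have := hx.1; linarith)).differentiableAt.differentiableWithinAt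
  · intro x hx
    rw [interior_Icc] at hx
    have hx1 : (-1:ℝ) < x := by have := hx.1; linarith
    rw [(hasDerivAt_f s α hx1).deriv]
    have hpos : (0:ℝ) < 1 + x := by linarith
    have heq : (x - s) + α * (1 + x)⁻¹ = (x^2 + (1-s)*x + (α - s)) / (1 + x) := by
      field_simp; ring
    rw [heq]
    exact div_nonneg (hq x hx) hpos.le

private lemma anti_f (s α a b : ℝ) (ha : 0 ≤ a)
    (hq : ∀ x ∈ Set.Ioo a b, x^2 + (1-s)*x + (α - s) ≤ 0) :
    AntitoneOn (fun x => (1/2) * (x - s)^2 + α * Real.log (1 + x)) (Set.Icc a b) := by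
  apply antitoneOn_of_deriv_nonpos (convex_Icc a b)
  · exact fun x hx => (hasDerivAt_f s α (by have := hx.1; linarith)).continuousAt.continuousWithinAt
  · intro x hx
    rw [interior_Icc] at hx
    exact (hasDerivAt_f s α (by have := hx.1; linarith)).differentiableAt.differentiableWithinAt
  · intro x hx
    rw [interior_Icc] at hx
    have hx1 : (-1:ℝ) < x := by have := hx.1; linarith
    rw [(hasDerivAt_f s α hx1).deriv]
    have hpos : (0:ℝ) < 1 + x := by linarith
    have heq : (x - s) + α * (1 + x)⁻¹ = (x^2 + (1-s)*x + (α - s)) / (1 + x) := by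
      field_simp; ring
    rw [heq]
    exact div_nonpos_of_nonpos_of_nonneg (hq x hx) hpos.le

private lemma key_main (s α : ℝ) (hα : 0 < α) (hs : 0 ≤ s) (ξ : ℝ)
    (hξ : ξ = (s - 1) / 2 + Real.sqrt ((1 + s) ^ 2 / 4 - α))
    (hdisc : 4 * α < (1 + s) ^ 2) (hξpos : 0 < ξ)
    (t : ℝ) (ht : 0 ≤ t) :
    min ((1/2) * (0 - s)^2 + α * Real.log (1 + 0))
        ((1/2) * (ξ - s)^2 + α * Real.log (1 + ξ)) ≤
      (1/2) * (t - s)^2 + α * Real.log (1 + t) := by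
  set g : ℝ → ℝ := fun x => (1/2) * (x - s)^2 + α * Real.log (1 + x) with hg
  have hD : 0 < (1 + s) ^ 2 / 4 - α := by linarith
  set r := Real.sqrt ((1 + s) ^ 2 / 4 - α) with hr
  have hr0 : 0 ≤ r := Real.sqrt_nonneg _
  have hr2 : r ^ 2 = (1 + s) ^ 2 / 4 - α := Real.sq_sqrt hD.le
  have hfac : ∀ x : ℝ, x^2 + (1-s)*x + (α - s) = (x - ξ) * (x - ((s-1)/2 - r)) := by
    intro x
    rw [hξ]
    linear_combination hr2
  rcases le_or_gt ξ t with h | h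
  · have := mono_f s α ξ t hξpos.le (fun x hx => by
      rw [hfac x]
      have h1 : 0 ≤ x - ξ := by linarith [hx.1]
      have h2 : 0 ≤ x - ((s-1)/2 - r) := by rw [hξ] at h1; linarith [hr0]
      exact mul_nonneg h1 h2)
    have h3 : g ξ ≤ g t := this (Set.left_mem_Icc.2 h) (Set.right_mem_Icc.2 h) h
    exact le_trans (min_le_right _ _) h3
  · rcases le_or_gt ((s-1)/2 - r) t with h2 | h2
    · have := anti_f s α t ξ ht (fun x hx => by
        rw [hfac x]
        have h1 : x - ξ ≤ 0 := by linarith [hx.2]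
        have h3 : 0 ≤ x - ((s-1)/2 - r) := by linarith [hx.1, h2]
        exact mul_nonpos_of_nonpos_of_nonneg h1 h3)
      have h3 : g ξ ≤ g t := this (Set.left_mem_Icc.2 h.le) (Set.right_mem_Icc.2 h.le) h.le
      exact le_trans (min_le_right _ _) h3
    · have := mono_f s α 0 t (le_refl 0) (fun x hx => by
        rw [hfac x]
        have h1 : x - ξ ≤ 0 := by linarith [hx.2]
        have h3 : x - ((s-1)/2 - r) ≤ 0 := by linarith [hx.2, h2]
        nlinarith [h1, h3])
      have h3 : g 0 ≤ g t := this (Set.left_mem_Icc.2 ht) (Set.right_mem_Icc.2 ht) ht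
      exact le_trans (min_le_left _ _) h3

private lemma key_else (s α : ℝ) (hα : 0 < α) (hs : 0 ≤ s) (ξ : ℝ)
    (hξ : ξ = (s - 1) / 2 + Real.sqrt ((1 + s) ^ 2 / 4 - α))
    (hnot : ¬(4 * α < (1 + s) ^ 2 ∧ 0 < ξ))
    (t : ℝ) (ht : 0 ≤ t) :
    (1/2) * (0 - s)^2 + α * Real.log (1 + 0) ≤
      (1/2) * (t - s)^2 + α * Real.log (1 + t) := by
  have key : ∀ x ∈ Set.Ioo (0:ℝ) t, 0 ≤ x^2 + (1-s)*x + (α - s) := by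
    intro x hx
    rcases le_or_gt ((1+s)^2) (4*α) with hD | hD
    · nlinarith [sq_nonneg (x - (s-1)/2)]
    · have hξn : ξ ≤ 0 := by
        by_contra hc
        exact hnot ⟨hD, lt_of_not_ge hc⟩
      have hr2 : (Real.sqrt ((1 + s) ^ 2 / 4 - α)) ^ 2 = (1 + s) ^ 2 / 4 - α :=
        Real.sq_sqrt (by linarith)
      have hr0 : 0 ≤ Real.sqrt ((1 + s) ^ 2 / 4 - α) := Real.sqrt_nonneg _
      rw [hξ] at hξn
      nlinarith [hx.1, hr2, hr0, hξn]
  have := mono_f s α 0 t (le_refl 0) key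
  exact this (Set.left_mem_Icc.2 ht) (Set.right_mem_Icc.2 ht) ht


open scoped Classical

/-- Vector case of the `ℓ_{2,log}`-shrinkage operator: with `s = ‖y‖₂`,
`f(x) = (1/2)(x-s)² + α log(1+x)`, `ξ = (s-1)/2 + √((1+s)²/4 - α)`, the vector
`w* = (ξ/‖y‖₂) • y` if `f(ξ) ≤ f(0)`, `(1+s)² > 4α` and `ξ > 0`, else `w* = 0`,
globally minimizes `w ↦ (1/2)‖y - w‖₂² + α log(1 + ‖w‖₂)`. -/
theorem vector_l2log_shrinkage {d : ℕ} (y : EuclideanSpace ℝ (Fin d)) (α : ℝ) (hα : 0 < α)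
    (s : ℝ) (hs : s = ‖y‖)
    (f : ℝ → ℝ) (hf : ∀ x, f x = (1 / 2) * (x - s) ^ 2 + α * Real.log (1 + x))
    (ξ : ℝ) (hξ : ξ = (s - 1) / 2 + Real.sqrt ((1 + s) ^ 2 / 4 - α))
    (wstar : EuclideanSpace ℝ (Fin d))
    (hwstar : wstar =
      if f ξ ≤ f 0 ∧ (1 + s) ^ 2 > 4 * α ∧ 0 < ξ then (ξ / ‖y‖) • y else 0) :
    ∀ w : EuclideanSpace ℝ (Fin d),
      (1 / 2) * ‖y - wstar‖ ^ 2 + α * Real.log (1 + ‖wstar‖) ≤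
        (1 / 2) * ‖y - w‖ ^ 2 + α * Real.log (1 + ‖w‖) := by
  intro w
  have hs0 : 0 ≤ s := hs ▸ norm_nonneg y
  -- lower bound on the objective at any w
  have hlb : (1/2) * (‖w‖ - s)^2 + α * Real.log (1 + ‖w‖) ≤
      (1 / 2) * ‖y - w‖ ^ 2 + α * Real.log (1 + ‖w‖) := by
    have h1 : |‖y‖ - ‖w‖| ≤ ‖y - w‖ := abs_norm_sub_norm_le y w
    have h2 : (‖w‖ - s)^2 ≤ ‖y - w‖^2 := by
      rw [hs]
      nlinarith [sq_abs (‖y‖ - ‖w‖), norm_nonneg (y - w), abs_nonneg (‖y‖ - ‖w‖)]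
    linarith
  have htw : (0:ℝ) ≤ ‖w‖ := norm_nonneg w
  by_cases hcond : f ξ ≤ f 0 ∧ (1 + s) ^ 2 > 4 * α ∧ 0 < ξ
  · obtain ⟨hfle, hdisc, hξpos⟩ := hcond
    rw [if_pos ⟨hfle, hdisc, hξpos⟩] at hwstar
    have hsp : 0 < s := by
      rcases hs0.lt_or_eq with h | h
      · exact h
      · exfalso
        rw [← h] at hξ hdisc
        have hsq : Real.sqrt ((1 + 0) ^ 2 / 4 - α) < 1/2 := by
          rw [Real.sqrt_lt' (by norm_num)]
          nlinarith
        rw [hξ] at hξpos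
        norm_num at hξpos hsq
        linarith
    have hyn : ‖y‖ = s := hs.symm
    have hsub : y - wstar = (1 - ξ / ‖y‖) • y := by
      rw [hwstar, sub_smul, one_smul]
    have hnw2 : ‖y - wstar‖^2 = (ξ - s)^2 := by
      rw [hsub, norm_smul, Real.norm_eq_abs, mul_pow, sq_abs, hyn]
      field_simp
      ring
    have hnws : ‖wstar‖ = ξ := by
      rw [hwstar, norm_smul, Real.norm_eq_abs, hyn,
        abs_of_pos (div_pos hξpos hsp)]
      field_simp
    have hmin : min ((1/2) * ((0:ℝ) - s)^2 + α * Real.log (1 + 0))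
        ((1/2) * (ξ - s)^2 + α * Real.log (1 + ξ)) ≤
        (1/2) * (‖w‖ - s)^2 + α * Real.log (1 + ‖w‖) :=
      key_main s α hα hs0 ξ hξ hdisc hξpos ‖w‖ htw
    have hfle' : (1/2) * (ξ - s)^2 + α * Real.log (1 + ξ) ≤
        (1/2) * ((0:ℝ) - s)^2 + α * Real.log (1 + 0) := by
      have := hfle
      rw [hf ξ, hf 0] at this
      linarith
    rw [hnw2, hnws]
    calc (1/2) * (ξ - s)^2 + α * Real.log (1 + ξ)
        ≤ (1/2) * (‖w‖ - s)^2 + α * Real.log (1 + ‖w‖) := by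
          rw [min_eq_right hfle'] at hmin; exact hmin
      _ ≤ _ := hlb
  · rw [if_neg hcond] at hwstar
    have h0 : (1 / 2) * ‖y - wstar‖ ^ 2 + α * Real.log (1 + ‖wstar‖) =
        (1/2) * ((0:ℝ) - s)^2 + α * Real.log (1 + 0) := by
      rw [hwstar, sub_zero, norm_zero, ← hs]
      ring_nf
    rw [h0]
    have hkey : (1/2) * ((0:ℝ) - s)^2 + α * Real.log (1 + 0) ≤
        (1/2) * (‖w‖ - s)^2 + α * Real.log (1 + ‖w‖) := by
      by_cases hbc : 4 * α < (1 + s) ^ 2 ∧ 0 < ξ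
      · have hmin := key_main s α hα hs0 ξ hξ hbc.1 hbc.2 ‖w‖ htw
        have hlt : ¬ (f ξ ≤ f 0) := fun h => hcond ⟨h, hbc.1, hbc.2⟩
        push_neg at hlt
        rw [hf ξ, hf 0] at hlt
        have : min ((1/2) * ((0:ℝ) - s)^2 + α * Real.log (1 + 0))
            ((1/2) * (ξ - s)^2 + α * Real.log (1 + ξ)) =
            (1/2) * ((0:ℝ) - s)^2 + α * Real.log (1 + 0) :=
          min_eq_left (by linarith)
        rw [this] at hmin
        exact hmin
      · exact key_else s α hα hs0 ξ hξ hbc ‖w‖ htw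
    calc _ ≤ (1/2) * (‖w‖ - s)^2 + α * Real.log (1 + ‖w‖) := hkey
      _ ≤ _ := hlb
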